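/- If two distinct n-bit integers w₁ ≠ w₂ are encoded by Encode_W-to-SIP, the resulting self-inverting permutations π*₁ and π*₂ are distinct. -/

import Mathlib

/-- Value (as Bool, true = 1) of the bit sequence B* = flip(B') at position i ∈ {1,...,2n+1},
where B' = 0^n ‖ (n-bit binary representation of w, MSB first) ‖ 1. -/
def bstar (n w i : ℕ) : Bool :=
  decide (i ≤ n) || (decide (i ≠ 2 * n + 1) && !(w.testBit (2 * n - i)))

/-- Positions (from 1 to 2n+1) of the 0s of B*, in increasing order. -/
def zerosPos (n w : ℕ) : List ℕ :=
  ((List.range (2 * n + 1)).map (· + 1)).filter fun i => !bstar n w i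

/-- Positions (from 1 to 2n+1) of the 1s of B*, in increasing order. -/
def onesPos (n w : ℕ) : List ℕ :=
  ((List.range (2 * n + 1)).map (· + 1)).filter fun i => bstar n w i

/-- The bitonic sequence σ = X ‖ reverse(Y) of Encode_W-to-SIP. -/
def sigmaList (n w : ℕ) : List ℕ :=
  zerosPos n w ++ (onesPos n w).reverse

/-- The self-inverting permutation π* of Encode_W-to-SIP, as the function pairing
σ_i with σ_{2n+2-i} (1-indexed), i.e., index i with index 2n-i (0-indexed),
fixing the middle element. -/
def encodeSIP (n w : ℕ) : ℕ → ℕ := fun x =>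
  (sigmaList n w).getD (2 * n - (sigmaList n w).idxOf x) 0

lemma base_split (n : ℕ) :
    ((List.range (2 * n + 1)).map (· + 1)) = List.range' 1 n ++ List.range' (n + 1) (n + 1) := by
  have h1 : ((List.range (2 * n + 1)).map (· + 1)) = List.range' 1 (2 * n + 1) := by
    rw [List.range'_eq_map_range]
    simp [Nat.add_comm]
  have h2 := List.range'_append (s := 1) (m := n) (n := n + 1) (step := 1)
  simp only [one_mul] at h2
  rw [h1, show 2 * n + 1 = n + (n + 1) from by omega, ← h2, show 1 + n = n + 1 from by omega]

lemma bstar_low {n w i : ℕ} (h2 : i ≤ n) : bstar n w i = true := by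
  simp [bstar, h2]

lemma bstar_mid {n w i : ℕ} (h1 : n < i) (h2 : i ≤ 2 * n) :
    bstar n w i = !w.testBit (2 * n - i) := by
  simp only [bstar]
  rw [decide_eq_false (show ¬ (i ≤ n) from by omega),
    decide_eq_true (show i ≠ 2 * n + 1 from by omega)]
  simp

lemma bstar_last (n w : ℕ) : bstar n w (2 * n + 1) = false := by
  simp only [bstar]
  rw [decide_eq_false (show ¬ (2 * n + 1 ≤ n) from by omega)]
  simp

lemma zeros_eq (n w : ℕ) :
    zerosPos n w = (List.range' (n + 1) (n + 1)).filter fun i => !bstar n w i := by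
  rw [zerosPos, base_split, List.filter_append]
  have : (List.range' 1 n).filter (fun i => !bstar n w i) = [] := by
    rw [List.filter_eq_nil_iff]
    intro a ha
    rw [List.mem_range'_1] at ha
    simp [bstar_low (show a ≤ n by omega)]
  rw [this, List.nil_append]

lemma ones_eq (n w : ℕ) :
    onesPos n w = List.range' 1 n ++ (List.range' (n + 1) (n + 1)).filter fun i => bstar n w i := by
  rw [onesPos, base_split, List.filter_append]
  congr 1
  rw [List.filter_eq_self]
  intro a ha
  rw [List.mem_range'_1] at ha
  exact bstar_low (by omega)

lemma mem_zeros {n w a : ℕ} (h : a ∈ zerosPos n w) : n + 1 ≤ a ∧ a ≤ 2 * n + 1 := by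
  rw [zeros_eq, List.mem_filter, List.mem_range'_1] at h
  omega

lemma last_mem_zeros (n w : ℕ) : 2 * n + 1 ∈ zerosPos n w := by
  rw [zeros_eq, List.mem_filter, List.mem_range'_1]
  refine ⟨by omega, ?_⟩
  simp [bstar_last]

lemma zeros_sorted (n w : ℕ) : List.Pairwise (· < ·) (zerosPos n w) := by
  rw [zeros_eq]
  exact (List.pairwise_lt_range' (s := n+1) (n := n+1)).filter _

lemma zeros_len_le (n w : ℕ) : (zerosPos n w).length ≤ n + 1 := by
  rw [zeros_eq]
  simpa using List.length_filter_le _ (List.range' (n + 1) (n + 1))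

lemma zeros_len_pos (n w : ℕ) : 1 ≤ (zerosPos n w).length :=
  List.length_pos_iff.mpr (List.ne_nil_of_mem (last_mem_zeros n w))

lemma zeros_add_rest (n w : ℕ) :
    (zerosPos n w).length + ((List.range' (n + 1) (n + 1)).filter fun i => bstar n w i).length
      = n + 1 := by
  have h0 := List.length_eq_length_filter_add (l := List.range' (n + 1) (n + 1)) (bstar n w)
  rw [List.length_range'] at h0
  have e1 : List.filter (bstar n w) (List.range' (n + 1) (n + 1))
      = List.filter (fun i => bstar n w i) (List.range' (n + 1) (n + 1)) := rfl
  have e2 : List.filter (fun x => !bstar n w x) (List.range' (n + 1) (n + 1))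
      = List.filter (fun i => !bstar n w i) (List.range' (n + 1) (n + 1)) := rfl
  rw [e1, e2] at h0
  rw [zeros_eq]
  omega

lemma revrange_indexOf : ∀ n j : ℕ, 1 ≤ j → j ≤ n →
    (List.range' 1 n).reverse.idxOf j = n - j := by
  intro n
  induction n with
  | zero => intro j h1 h2; omega
  | succ n ih =>
    intro j h1 h2
    rw [List.range'_1_concat, List.reverse_append]
    simp only [List.reverse_singleton, List.singleton_append, List.idxOf_cons]
    by_cases hj : j = n + 1
    · subst hj
      simp [Nat.add_comm]
    · have : (1 + n == j) = false := by
        simp [Nat.add_comm]; omega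
      rw [this]
      simp only [cond_false]
      rw [ih j h1 (by omega)]
      omega

lemma sigma_indexOf {n w j : ℕ} (h1 : 1 ≤ j) (h2 : j ≤ n) :
    (sigmaList n w).idxOf j = 2 * n + 1 - j := by
  rw [sigmaList, ones_eq, List.reverse_append]
  rw [← List.append_assoc]
  rw [List.idxOf_append_of_notMem, revrange_indexOf n j h1 h2]
  · rw [List.length_append, List.length_reverse, zeros_add_rest]
    omega
  · intro hmem
    rw [List.mem_append] at hmem
    rcases hmem with hmem | hmem
    · exact absurd (mem_zeros hmem).1 (by omega)
    · rw [List.mem_reverse, List.mem_filter, List.mem_range'_1] at hmem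
      omega

lemma encode_eval {n w j : ℕ} (h1 : 1 ≤ j) (h2 : j ≤ n) :
    encodeSIP n w j = (sigmaList n w).getD (j - 1) 0 := by
  rw [encodeSIP, sigma_indexOf h1 h2]
  congr 1
  omega

lemma sigma_getD {n w t : ℕ} (ht : t < (zerosPos n w).length) :
    (sigmaList n w).getD t 0 = (zerosPos n w).getD t 0 := by
  rw [sigmaList, List.getD_append _ _ _ _ ht]

lemma zeros_get_last {n w : ℕ} (ht : (zerosPos n w).length - 1 < (zerosPos n w).length) :
    (zerosPos n w).get ⟨(zerosPos n w).length - 1, ht⟩ = 2 * n + 1 := by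
  obtain ⟨t, htg⟩ := List.get_of_mem (last_mem_zeros n w)
  have hmono := (zeros_sorted n w).sortedLT.strictMono_get
  rcases eq_or_lt_of_le (show (t : ℕ) ≤ (zerosPos n w).length - 1 by omega) with he | hl
  · rw [← htg]; congr 1; exact (Fin.ext he.symm)
  · exfalso
    have := hmono (show t < (⟨(zerosPos n w).length - 1, ht⟩ : Fin _) from hl)
    rw [htg] at this
    have hm := mem_zeros (List.get_mem (zerosPos n w) ⟨(zerosPos n w).length - 1, ht⟩)
    omega

lemma zeros_get_lt {n w t : ℕ} (ht : t < (zerosPos n w).length)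
    (hlt : t < (zerosPos n w).length - 1) :
    (zerosPos n w).get ⟨t, ht⟩ < 2 * n + 1 := by
  have hmono := (zeros_sorted n w).sortedLT.strictMono_get
  have h2 : (zerosPos n w).length - 1 < (zerosPos n w).length := by omega
  have := hmono (show (⟨t, ht⟩ : Fin _) < ⟨(zerosPos n w).length - 1, h2⟩ from hlt)
  rwa [zeros_get_last h2] at this

lemma len_le_aux {n w₁ w₂ : ℕ}
    (hS : ∀ t < n, (sigmaList n w₁).getD t 0 = (sigmaList n w₂).getD t 0) :
    (zerosPos n w₁).length ≤ (zerosPos n w₂).length := by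
  by_contra hc
  push_neg at hc
  set m₁ := (zerosPos n w₁).length with hm₁
  set m₂ := (zerosPos n w₂).length with hm₂
  have h1 : 1 ≤ m₂ := zeros_len_pos n w₂
  have h2 : m₁ ≤ n + 1 := zeros_len_le n w₁
  have ht1 : m₂ - 1 < m₁ := by omega
  have ht2 : m₂ - 1 < m₂ := by omega
  have hS' := hS (m₂ - 1) (by omega)
  rw [sigma_getD ht1, sigma_getD ht2, List.getD_eq_get _ _ (⟨m₂ - 1, ht1⟩ : Fin _), List.getD_eq_get _ _ (⟨m₂ - 1, ht2⟩ : Fin _)] at hS'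
  rw [zeros_get_last ht2] at hS'
  have := zeros_get_lt ht1 (by omega)
  omega

lemma bit_iff_mem {n w k : ℕ} (hk : k < n) :
    w.testBit k = true ↔ (2 * n - k) ∈ zerosPos n w := by
  rw [zeros_eq, List.mem_filter, List.mem_range'_1]
  have hb : bstar n w (2 * n - k) = !w.testBit k := by
    rw [bstar_mid (by omega) (by omega)]
    congr 2
    omega
  constructor
  · intro h
    refine ⟨by omega, ?_⟩
    simp [hb, h]
  · rintro ⟨-, h⟩
    simp [hb] at h
    exact h

/-- If two distinct n-bit integers are encoded by Encode_W-to-SIP, the resulting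
self-inverting permutations are distinct. -/
theorem stmt_16 (n w₁ w₂ : ℕ) (hw₁ : w₁ < 2 ^ n) (hw₂ : w₂ < 2 ^ n)
    (h : w₁ ≠ w₂) : encodeSIP n w₁ ≠ encodeSIP n w₂ := by
  intro heq
  apply h
  rcases Nat.eq_zero_or_pos n with hn | hn
  · subst hn; simp at hw₁ hw₂; omega
  have hS : ∀ t < n, (sigmaList n w₁).getD t 0 = (sigmaList n w₂).getD t 0 := by
    intro t ht
    have := congrFun heq (t + 1)
    rw [encode_eval (by omega) (by omega), encode_eval (by omega) (by omega)] at this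
    rwa [Nat.add_sub_cancel] at this
  have hS' : ∀ t < n, (sigmaList n w₂).getD t 0 = (sigmaList n w₁).getD t 0 :=
    fun t ht => (hS t ht).symm
  have hmm : (zerosPos n w₁).length = (zerosPos n w₂).length :=
    le_antisymm (len_le_aux hS) (len_le_aux hS')
  have hL : zerosPos n w₁ = zerosPos n w₂ := by
    apply List.ext_get hmm
    intro t ht1 ht2
    rcases lt_or_ge t n with htn | htn
    · have := hS t htn
      rw [sigma_getD ht1, sigma_getD ht2, List.getD_eq_get _ _ (⟨t, ht1⟩ : Fin _),
        List.getD_eq_get _ _ (⟨t, ht2⟩ : Fin _)] at this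
      exact this
    · have h1 : (zerosPos n w₁).length ≤ n + 1 := zeros_len_le n w₁
      have he1 : t = (zerosPos n w₁).length - 1 := by omega
      have he2 : t = (zerosPos n w₂).length - 1 := by omega
      have g1 := zeros_get_last (n := n) (w := w₁) (by omega)
      have g2 := zeros_get_last (n := n) (w := w₂) (by omega)
      have e1 : (zerosPos n w₁).get ⟨t, ht1⟩ = 2 * n + 1 := by
        rw [← g1]; congr 1; exact Fin.ext he1
      have e2 : (zerosPos n w₂).get ⟨t, ht2⟩ = 2 * n + 1 := by
        rw [← g2]; congr 1; exact Fin.ext he2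
      rw [e1, e2]
  apply Nat.eq_of_testBit_eq
  intro k
  rcases lt_or_ge k n with hk | hk
  · have hiff : w₁.testBit k = true ↔ w₂.testBit k = true := by
      rw [bit_iff_mem hk, hL, ← bit_iff_mem hk]
    cases hb1 : w₁.testBit k <;> cases hb2 : w₂.testBit k <;>
      simp [hb1, hb2] at hiff ⊢
  · rw [Nat.testBit_lt_two_pow (lt_of_lt_of_le hw₁ (Nat.pow_le_pow_right (by norm_num) hk)),
      Nat.testBit_lt_two_pow (lt_of_lt_of_le hw₂ (Nat.pow_le_pow_right (by norm_num) hk))]
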